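/- Let g be the probability mass function of a sum of m independent Bernoulli random variables. Then g is log-concave: for every integer k, g_k² ≥ g_{k-1}·g_{k+1}. -/

import Mathlib

open Finset

/-- Probability mass function of a sum of independent Bernoulli random variables
indexed by the finite set `I`, with parameters `p i`. -/
def bernoulliSumPMF (I : Finset ℕ) (p : ℕ → ℝ) (k : ℤ) : ℝ :=
  if 0 ≤ k then
    ∑ S ∈ I.powersetCard k.toNat, (∏ i ∈ S, p i) * (∏ i ∈ I \ S, (1 - p i))
  else 0

def bsF (p : ℕ → ℝ) : ℕ → ℤ → ℝ
  | 0, k => if k = 0 then 1 else 0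
  | (n+1), k => (1 - p n) * bsF p n k + p n * bsF p n (k-1)

lemma bsF_neg (p : ℕ → ℝ) (n : ℕ) : ∀ k : ℤ, k < 0 → bsF p n k = 0 := by
  induction n with
  | zero => intro k hk; simp [bsF, hk.ne]
  | succ n ih => intro k hk; simp [bsF, ih k hk, ih (k-1) (by omega)]

lemma bsF_eq (p : ℕ → ℝ) (n : ℕ) : ∀ k : ℤ,
    bernoulliSumPMF (Finset.range n) p k = bsF p n k := by
  induction n with
  | zero =>
    intro k
    rcases lt_trichotomy k 0 with h | h | h
    · rw [bsF_neg p 0 k h, bernoulliSumPMF, if_neg (by omega)]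
    · subst h; simp [bernoulliSumPMF, bsF]
    · rw [bernoulliSumPMF, if_pos h.le]
      have h1 : (∅ : Finset ℕ).card < k.toNat := by simp; omega
      rw [show bsF p 0 k = 0 from by simp [bsF, h.ne'], Finset.range_zero,
        Finset.powersetCard_eq_empty.mpr h1, Finset.sum_empty]
  | succ n ih =>
    intro k
    have hnr : n ∉ Finset.range n := by simp
    rcases lt_trichotomy k 0 with h | h | h
    · rw [bsF_neg p (n+1) k h, bernoulliSumPMF, if_neg (by omega)]
    · subst h
      show _ = (1 - p n) * bsF p n 0 + p n * bsF p n (0-1)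
      rw [← ih 0, bsF_neg p n _ (by norm_num)]
      simp only [bernoulliSumPMF, if_pos le_rfl, Int.toNat_zero,
        Finset.powersetCard_zero, Finset.sum_singleton, Finset.prod_empty,
        Finset.sdiff_empty, one_mul]
      rw [Finset.range_add_one, Finset.prod_insert hnr]
      ring
    · -- k ≥ 1
      show _ = (1 - p n) * bsF p n k + p n * bsF p n (k-1)
      rw [← ih k, ← ih (k-1)]
      obtain ⟨j, hkt⟩ : ∃ j, k.toNat = j + 1 := ⟨k.toNat - 1, by omega⟩
      have hk1t : (k - 1).toNat = j := by omega
      simp only [bernoulliSumPMF, if_pos h.le, if_pos (show (0:ℤ) ≤ k - 1 by omega)]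
      rw [hkt, hk1t, Finset.range_add_one, Finset.powersetCard_succ_insert hnr]
      rw [Finset.sum_union]
      · congr 1
        · rw [Finset.mul_sum]
          apply Finset.sum_congr rfl
          intro S hS
          have hSsub : S ⊆ Finset.range n := (Finset.mem_powersetCard.mp hS).1
          have hnS : n ∉ S := fun hn => hnr (hSsub hn)
          rw [Finset.insert_sdiff_of_notMem _ hnS,
            Finset.prod_insert (fun hc => hnr (Finset.mem_sdiff.mp hc).1)]
          ring
        · rw [Finset.sum_image, Finset.mul_sum]
          · apply Finset.sum_congr rfl
            intro S hS
            have hSsub : S ⊆ Finset.range n := (Finset.mem_powersetCard.mp hS).1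
            have hnS : n ∉ S := fun hn => hnr (hSsub hn)
            rw [Finset.prod_insert hnS, Finset.insert_sdiff_insert,
              Finset.sdiff_insert_of_notMem hnr]
            ring
          · intro a ha b hb hab
            have hna : n ∉ a := fun hn => hnr ((Finset.mem_powersetCard.mp ha).1 hn)
            have hnb : n ∉ b := fun hn => hnr ((Finset.mem_powersetCard.mp hb).1 hn)
            have := congrArg (fun s => Finset.erase s n) hab
            simpa [Finset.erase_insert hna, Finset.erase_insert hnb] using this
      · rw [Finset.disjoint_left]
        intro S hS hS'
        obtain ⟨T, hT, rfl⟩ := Finset.mem_image.mp hS'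
        exact hnr ((Finset.mem_powersetCard.mp hS).1 (Finset.mem_insert_self n T))

lemma bsF_inv (p : ℕ → ℝ) (n : ℕ) (hp : ∀ i, i < n → 0 ≤ p i ∧ p i ≤ 1) :
    ∀ a b : ℤ, a ≤ b → bsF p n (a-1) * bsF p n (b+1) ≤ bsF p n a * bsF p n b := by
  induction n with
  | zero =>
    intro a b hab
    have h1 : bsF p 0 (a-1) * bsF p 0 (b+1) = 0 := by
      rcases eq_or_ne (a-1) 0 with h | h
      · rw [show bsF p 0 (b+1) = 0 from by simp [bsF]; omega, mul_zero]
      · rw [show bsF p 0 (a-1) = 0 from by simp [bsF, h], zero_mul]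
    rw [h1]
    apply mul_nonneg <;> (simp only [bsF]; split <;> norm_num)
  | succ n ih =>
    intro a b hab
    have hp' : ∀ i, i < n → 0 ≤ p i ∧ p i ≤ 1 := fun i hi => hp i (by omega)
    have hq0 : 0 ≤ 1 - p n := by linarith [(hp n (by omega)).2]
    have hp0 : 0 ≤ p n := (hp n (by omega)).1
    have H := ih hp'
    have h1 := H a b hab
    have h2 := H (a-1) (b-1) (by omega)
    have h3 : bsF p n (a-2) * bsF p n (b+1) ≤ bsF p n a * bsF p n (b-1) := by
      rcases eq_or_lt_of_le hab with h | h
      · subst h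
        have := H (a-1) a (by omega)
        calc bsF p n (a-2) * bsF p n (a+1) ≤ bsF p n (a-1) * bsF p n a := by
              have := H (a-1) a (by omega)
              convert this using 3 <;> ring_nf
          _ = bsF p n a * bsF p n (a-1) := mul_comm _ _
      · have ha := H (a-1) b (by omega)
        have hb := H a (b-1) (by omega)
        rw [show (a:ℤ) - 1 - 1 = a - 2 from by ring] at ha
        rw [show (b:ℤ) - 1 + 1 = b from by ring] at hb
        exact le_trans ha hb
    show ((1-p n) * bsF p n (a-1) + p n * bsF p n (a-1-1)) *
        ((1-p n) * bsF p n (b+1) + p n * bsF p n (b+1-1)) ≤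
      ((1-p n) * bsF p n a + p n * bsF p n (a-1)) *
        ((1-p n) * bsF p n b + p n * bsF p n (b-1))
    rw [show (a:ℤ) - 1 - 1 = a - 2 from by ring, show (b:ℤ) + 1 - 1 = b from by ring]
    rw [show (a:ℤ) - 1 - 1 = a - 2 from by ring] at h2
    rw [show (b:ℤ) - 1 + 1 = b from by ring] at h2
    nlinarith [mul_le_mul_of_nonneg_left h1 (mul_nonneg hq0 hq0),
      mul_le_mul_of_nonneg_left h2 (mul_nonneg hp0 hp0),
      mul_le_mul_of_nonneg_left h3 (mul_nonneg hq0 hp0)]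


theorem bernoulli_sum_log_concave (m : ℕ) (p : ℕ → ℝ)
    (hp : ∀ i ∈ Finset.range m, 0 ≤ p i ∧ p i ≤ 1)
    (g : ℤ → ℝ) (hg : ∀ k, g k = bernoulliSumPMF (Finset.range m) p k) (k : ℤ) :
    g (k - 1) * g (k + 1) ≤ g k ^ 2 := by
  have hp' : ∀ i, i < m → 0 ≤ p i ∧ p i ≤ 1 := fun i hi => hp i (Finset.mem_range.mpr hi)
  rw [hg, hg, hg, bsF_eq, bsF_eq, bsF_eq, sq]
  exact bsF_inv p m hp' k k le_rfl
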